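/- Every finite loopless multigraph G satisfies Φ(G) ≥ δ(G) − μ(G); that is, for every odd set U ⊆ V one has 2|E⁺(U)| ≥ (δ(G)−μ(G))(|U|+1). -/
import Mathlib


open Finset

variable {V E : Type} [Fintype V] [DecidableEq V] [Fintype E]

/-- A multigraph given by an incidence map `ends : E → Sym2 V` is loopless if no edge is a loop. -/
def Loopless (ends : E → Sym2 V) : Prop := ∀ e : E, ¬ (ends e).IsDiag

/-- The degree of a vertex: the number of edges incident with it. -/
def mDegree (ends : E → Sym2 V) (v : V) : ℕ :=
  (univ.filter fun e => v ∈ ends e).card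

/-- The minimum degree δ(G). -/
noncomputable def minDegree (ends : E → Sym2 V) : ℕ :=
  sInf (Set.range (mDegree ends))

/-- The maximum degree Δ(G). -/
noncomputable def maxDegree (ends : E → Sym2 V) : ℕ :=
  sSup (Set.range (mDegree ends))

/-- The maximum multiplicity μ(G) of an edge. -/
noncomputable def maxMultiplicity (ends : E → Sym2 V) : ℕ :=
  sSup (Set.range fun e : E => (univ.filter fun f : E => ends f = ends e).card)

/-- `E(U)`: the set of edges with both ends in `U`. -/
def edgesIn (ends : E → Sym2 V) (U : Finset V) : Finset E :=
  univ.filter fun e => ∀ v ∈ ends e, v ∈ U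

/-- `E⁺(U)`: the set of edges with at least one end in `U`. -/
def edgesPlus (ends : E → Sym2 V) (U : Finset V) : Finset E :=
  univ.filter fun e => ∃ v ∈ ends e, v ∈ U

/-- `F(U)`: the set of edges with exactly one end in `U`. -/
def edgesF (ends : E → Sym2 V) (U : Finset V) : Finset E :=
  univ.filter fun e => (∃ v ∈ ends e, v ∈ U) ∧ ¬ ∀ v ∈ ends e, v ∈ U

/-- `E(X,Y)`: the set of edges with one end in `X` and the other end in `Y`. -/
def edgesBetween (ends : E → Sym2 V) (X Y : Finset V) : Finset E :=
  univ.filter fun e => ∃ x ∈ X, ∃ y ∈ Y, ends e = s(x, y)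

/-- An odd set: a vertex set of odd size at least 3. -/
def IsOddSet (U : Finset V) : Prop := 3 ≤ U.card ∧ Odd U.card

/-- A proper edge coloring: each vertex is incident with at most one edge of each color. -/
def IsProperEdgeColoring (ends : E → Sym2 V) {k : ℕ} (c : E → Fin k) : Prop :=
  ∀ v : V, ∀ e f : E, v ∈ ends e → v ∈ ends f → c e = c f → e = f

/-- The chromatic index χ'(G). -/
noncomputable def chromaticIndex (ends : E → Sym2 V) : ℕ :=
  sInf {k : ℕ | ∃ c : E → Fin k, IsProperEdgeColoring ends c}

/-- A cover coloring: each vertex is incident with at least one edge of each color. -/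
def IsCoverColoring (ends : E → Sym2 V) {k : ℕ} (c : E → Fin k) : Prop :=
  ∀ (v : V) (i : Fin k), ∃ e : E, v ∈ ends e ∧ c e = i

/-- The cover index ξ(G). -/
noncomputable def coverIndex (ends : E → Sym2 V) : ℕ :=
  sSup {k : ℕ | ∃ c : E → Fin k, IsCoverColoring ends c}

/-- The density Γ(G) = max over odd sets U of 2|E(U)|/(|U|-1). -/
noncomputable def density (ends : E → Sym2 V) : ℝ :=
  sSup {x : ℝ | ∃ U : Finset V, IsOddSet U ∧
    x = 2 * (edgesIn ends U).card / ((U.card : ℝ) - 1)}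

/-- The co-density Φ(G) = min over odd sets U of 2|E⁺(U)|/(|U|+1). -/
noncomputable def codensity (ends : E → Sym2 V) : ℝ :=
  sInf {x : ℝ | ∃ U : Finset V, IsOddSet U ∧
    x = 2 * (edgesPlus ends U).card / ((U.card : ℝ) + 1)}

section Aux

variable {V E : Type} [Fintype V] [DecidableEq V] [Fintype E]

/-- Per-edge count of endpoints in `U`, corrected by the boundary indicator. -/
lemma aux_edge_count [DecidableEq E] (ends : E → Sym2 V) (hG : Loopless ends) (U : Finset V)
    (e : E) :
    (U.filter fun v => v ∈ ends e).card + (if e ∈ edgesF ends U then 1 else 0)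
      = 2 * (if e ∈ edgesPlus ends U then 1 else 0) := by
  obtain ⟨⟨a, b⟩, h⟩ := Quot.exists_rep (ends e)
  have h : ends e = s(a, b) := h.symm
  have hab : a ≠ b := by
    have := hG e
    rw [h, Sym2.mk_isDiag_iff] at this
    exact this
  have hall : (∀ v ∈ ends e, v ∈ U) ↔ (a ∈ U ∧ b ∈ U) := by
    rw [h]
    constructor
    · intro H; exact ⟨H a (by simp), H b (by simp)⟩
    · rintro ⟨h1, h2⟩ v hv
      rw [Sym2.mem_iff] at hv
      rcases hv with rfl | rfl <;> assumption
  have hex : (∃ v ∈ ends e, v ∈ U) ↔ (a ∈ U ∨ b ∈ U) := by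
    rw [h]
    constructor
    · rintro ⟨v, hv, hvU⟩
      rw [Sym2.mem_iff] at hv
      rcases hv with rfl | rfl
      · exact Or.inl hvU
      · exact Or.inr hvU
    · rintro (hx | hx)
      · exact ⟨a, by simp, hx⟩
      · exact ⟨b, by simp, hx⟩
  have hF : e ∈ edgesF ends U ↔ ((a ∈ U ∨ b ∈ U) ∧ ¬(a ∈ U ∧ b ∈ U)) := by
    simp only [edgesF, Finset.mem_filter, Finset.mem_univ, true_and, hall, hex]
  have hP : e ∈ edgesPlus ends U ↔ (a ∈ U ∨ b ∈ U) := by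
    simp only [edgesPlus, Finset.mem_filter, Finset.mem_univ, true_and, hex]
  have hfilter : (U.filter fun v => v ∈ ends e) = U ∩ {a, b} := by
    ext x
    simp [h, Sym2.mem_iff, and_comm]
  rw [hfilter]
  by_cases haU : a ∈ U <;> by_cases hbU : b ∈ U
  · have hi : U ∩ {a, b} = {a, b} := Finset.inter_eq_right.mpr (by
      intro x hx
      simp only [Finset.mem_insert, Finset.mem_singleton] at hx
      rcases hx with rfl | rfl <;> assumption)
    rw [hi, Finset.card_insert_of_notMem (by simp [hab]), Finset.card_singleton]
    simp [hF, hP, haU, hbU]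
  · have hi : U ∩ {a, b} = {a} := by
      ext x
      simp only [Finset.mem_inter, Finset.mem_insert, Finset.mem_singleton]
      constructor
      · rintro ⟨hx, rfl | rfl⟩ <;> simp_all
      · rintro rfl; simp [haU]
    rw [hi, Finset.card_singleton]
    simp [hF, hP, haU, hbU]
  · have hi : U ∩ {a, b} = {b} := by
      ext x
      simp only [Finset.mem_inter, Finset.mem_insert, Finset.mem_singleton]
      constructor
      · rintro ⟨hx, rfl | rfl⟩ <;> simp_all
      · rintro rfl; simp [hbU]
    rw [hi, Finset.card_singleton]
    simp [hF, hP, haU, hbU]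
  · have hi : U ∩ {a, b} = ∅ := by
      ext x
      simp only [Finset.mem_inter, Finset.mem_insert, Finset.mem_singleton,
        Finset.notMem_empty, iff_false, not_and]
      rintro hx (rfl | rfl) <;> simp_all
    rw [hi, Finset.card_empty]
    simp [hF, hP, haU, hbU]

lemma aux_sum_deg [DecidableEq E] (ends : E → Sym2 V) (hG : Loopless ends) (U : Finset V) :
    (∑ v ∈ U, mDegree ends v) + (edgesF ends U).card
      = 2 * (edgesPlus ends U).card := by
  have h1 : (∑ v ∈ U, mDegree ends v) = ∑ e : E, (U.filter fun v => v ∈ ends e).card := by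
    simp only [mDegree, Finset.card_filter]
    rw [Finset.sum_comm]
  have h2 : (edgesF ends U).card = ∑ e : E, (if e ∈ edgesF ends U then 1 else 0) := by
    rw [Finset.sum_ite_mem, Finset.univ_inter, Finset.sum_const, smul_eq_mul, mul_one]
  have h3 : (edgesPlus ends U).card = ∑ e : E, (if e ∈ edgesPlus ends U then 1 else 0) := by
    rw [Finset.sum_ite_mem, Finset.univ_inter, Finset.sum_const, smul_eq_mul, mul_one]
  rw [h1, h2, h3, ← Finset.sum_add_distrib, Finset.mul_sum]
  exact Finset.sum_congr rfl fun e _ => aux_edge_count ends hG U e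

end Aux

/-- Every finite loopless multigraph `G` satisfies `Φ(G) ≥ δ(G) − μ(G)`;
that is, for every odd set `U` one has `2|E⁺(U)| ≥ (δ(G)−μ(G))(|U|+1)`. -/
theorem stmt_7
    {V E : Type} [Fintype V] [DecidableEq V] [Fintype E]
    (ends : E → Sym2 V) (hG : Loopless ends) :
    ∀ U : Finset V, IsOddSet U →
      ((minDegree ends : ℤ) - (maxMultiplicity ends : ℤ)) * ((U.card : ℤ) + 1) ≤
        2 * ((edgesPlus ends U).card : ℤ) := by
  classical
  intro U hU
  obtain ⟨hcard3, _⟩ := hU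
  obtain ⟨v, hv⟩ := Finset.card_pos.mp (show 0 < U.card by omega)
  set δ := minDegree ends with hδdef
  set μ := maxMultiplicity ends with hμdef
  have hδ : ∀ w : V, δ ≤ mDegree ends w := fun w => Nat.sInf_le ⟨w, rfl⟩
  have hsum : δ * U.card ≤ ∑ w ∈ U, mDegree ends w := by
    calc δ * U.card = ∑ _w ∈ U, δ := by rw [Finset.sum_const, smul_eq_mul, mul_comm]
    _ ≤ _ := Finset.sum_le_sum fun w _ => hδ w
  -- key: δ ≤ μ * (|U| - 1) + |F(U)|
  set A := Finset.univ.filter (fun e : E => v ∈ ends e) with hAdef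
  set S := A.filter (fun e => ∀ w ∈ ends e, w ∈ U) with hSdef
  set T := A.filter (fun e => ¬ ∀ w ∈ ends e, w ∈ U) with hTdef
  have hsplit : S.card + T.card = A.card :=
    Finset.card_filter_add_card_filter_not (fun e => ∀ w ∈ ends e, w ∈ U)
  have hT : T ⊆ edgesF ends U := by
    intro e he
    simp only [hTdef, hAdef, Finset.mem_filter, Finset.mem_univ, true_and] at he
    simp only [edgesF, Finset.mem_filter, Finset.mem_univ, true_and]
    exact ⟨⟨v, he.1, hv⟩, he.2⟩
  have hS : S.card ≤ μ * (U.card - 1) := by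
    have h1 : S.card ≤ μ * ((U.erase v).image (fun u => s(v, u))).card := by
      apply Finset.card_le_mul_card_image_of_maps_to (f := ends)
      · intro e he
        simp only [hSdef, hAdef, Finset.mem_filter, Finset.mem_univ, true_and] at he
        obtain ⟨hve, hall⟩ := he
        obtain ⟨u, hu⟩ := Sym2.mem_iff_exists.mp hve
        have huU : u ∈ U := hall u (by rw [hu]; exact Sym2.mem_mk_right v u)
        have huv : u ≠ v := by
          have := hG e
          rw [hu, Sym2.mk_isDiag_iff] at this
          exact fun hh => this hh.symm
        exact Finset.mem_image.mpr ⟨u, Finset.mem_erase.mpr ⟨huv, huU⟩, hu.symm⟩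
      · intro b _
        rcases Finset.eq_empty_or_nonempty (S.filter fun e => ends e = b) with hem | ⟨e0, he0⟩
        · simp [hem]
        · simp only [Finset.mem_filter] at he0
          calc (S.filter fun e => ends e = b).card
              ≤ (Finset.univ.filter fun f : E => ends f = ends e0).card := by
                apply Finset.card_le_card
                intro f hf
                simp only [Finset.mem_filter, Finset.mem_univ, true_and] at hf ⊢
                rw [hf.2, he0.2]
            _ ≤ μ := le_csSup ((Set.finite_range _).bddAbove) ⟨e0, rfl⟩
    calc S.card ≤ μ * ((U.erase v).image (fun u => s(v, u))).card := h1
      _ ≤ μ * (U.card - 1) := by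
          apply Nat.mul_le_mul_left
          calc ((U.erase v).image (fun u => s(v, u))).card ≤ (U.erase v).card :=
                Finset.card_image_le
            _ = U.card - 1 := Finset.card_erase_of_mem hv
  have hkey : δ ≤ μ * (U.card - 1) + (edgesF ends U).card := by
    calc δ ≤ mDegree ends v := hδ v
      _ = A.card := rfl
      _ = S.card + T.card := hsplit.symm
      _ ≤ μ * (U.card - 1) + (edgesF ends U).card :=
          Nat.add_le_add hS (Finset.card_le_card hT)
  have hmain := aux_sum_deg ends hG U
  -- move to ℤ
  have hc1 : (1 : ℕ) ≤ U.card := by omega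
  have hsumZ : (δ : ℤ) * U.card ≤ (∑ w ∈ U, mDegree ends w : ℕ) := by exact_mod_cast hsum
  have hkeyZ : (δ : ℤ) ≤ (μ : ℤ) * ((U.card : ℤ) - 1) + (edgesF ends U).card := by
    have := hkey
    zify [hc1] at this
    linarith
  have hmainZ : ((∑ w ∈ U, mDegree ends w : ℕ) : ℤ) + (edgesF ends U).card
      = 2 * (edgesPlus ends U).card := by exact_mod_cast hmain
  have hμ0 : (0 : ℤ) ≤ (μ : ℤ) := Int.natCast_nonneg μ
  nlinarith [hsumZ, hkeyZ, hmainZ, hμ0]
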